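/- A bounded subset A of a real Banach space X is weakly relatively compact if and only if for every sequence (x_n) in A there exists x ∈ X such that x*(x) ≤ limsup_n x*(x_n) for all x* ∈ X*. -/

import Mathlib

noncomputable section
open Filter Topology Set NormedSpace Pointwise

variable {X : Type*} [NormedAddCommGroup X] [NormedSpace ℝ X] [CompleteSpace X]

/-- `B` is a boundary for `X`: a subset of the dual unit sphere on which every
element of `X` attains its norm. -/
def IsBoundary (B : Set (StrongDual ℝ X)) : Prop :=
  (∀ f ∈ B, ‖f‖ = 1) ∧ ∀ x : X, ∃ f ∈ B, f x = ‖x‖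

/-- The closure of `S` in the topology `σ_B` of pointwise convergence on `B`. -/
def sigmaClosure (B : Set (StrongDual ℝ X)) (S : Set X) : Set X :=
  {x | ∀ ε > (0 : ℝ), ∀ F : Finset (StrongDual ℝ X), (F : Set (StrongDual ℝ X)) ⊆ B →
    ∃ y ∈ S, ∀ f ∈ F, |f x - f y| < ε}

set_option linter.unusedSectionVars false
set_option maxHeartbeats 1000000

def psi : WeakSpace ℝ X → WeakDual ℝ (StrongDual ℝ X) :=
  fun x => (inclusionInDoubleDual ℝ X ((toWeakSpace ℝ X).symm x) : StrongDual ℝ (StrongDual ℝ X))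

lemma psi_inducing : IsInducing (psi (X := X)) := by
  constructor
  rw [show ((instTopologicalSpaceWeakSpace ℝ X) : TopologicalSpace (WeakSpace ℝ X)) = TopologicalSpace.induced (fun x (y : StrongDual ℝ X) => y x) Pi.topologicalSpace from rfl]
  rw [show ((instTopologicalSpaceWeakDual ℝ (StrongDual ℝ X)) : TopologicalSpace (WeakDual ℝ (StrongDual ℝ X))) = TopologicalSpace.induced (fun (z : StrongDual ℝ (StrongDual ℝ X)) (y : StrongDual ℝ X) => z y) Pi.topologicalSpace from rfl]
  exact (induced_compose (f := psi (X := X)) (g := fun (z : StrongDual ℝ (StrongDual ℝ X)) (y : StrongDual ℝ X) => z y)).symm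

lemma psi_inj : Function.Injective (psi (X := X)) := by
  intro a b h
  have := (inclusionInDoubleDualLi ℝ (E := X)).injective
  have h2 : inclusionInDoubleDual ℝ X ((toWeakSpace ℝ X).symm a) = inclusionInDoubleDual ℝ X ((toWeakSpace ℝ X).symm b) := h
  have h3 := this h2
  simpa using congrArg (toWeakSpace ℝ X) h3

lemma bddf (A : Set X) (hA : Bornology.IsBounded A) (x : ℕ → X) (hx : ∀ n, x n ∈ A)
    (f : StrongDual ℝ X) : IsBoundedUnder (· ≤ ·) atTop (fun n => f (x n)) ∧
      IsBoundedUnder (· ≥ ·) atTop (fun n => f (x n)) := by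
  obtain ⟨r, hr⟩ := hA.subset_closedBall 0
  have key : ∀ n, |f (x n)| ≤ ‖f‖ * r := by
    intro n
    calc |f (x n)| = ‖f (x n)‖ := rfl
    _ ≤ ‖f‖ * ‖x n‖ := f.le_opNorm _
    _ ≤ ‖f‖ * r := by
        have := hr (hx n)
        simp only [Metric.mem_closedBall, dist_zero_right] at this
        exact mul_le_mul_of_nonneg_left this (norm_nonneg f)
  constructor
  · exact isBoundedUnder_of ⟨‖f‖ * r, fun n => (le_abs_self _).trans (key n)⟩
  · exact isBoundedUnder_of ⟨-(‖f‖ * r), fun n => neg_le_of_neg_le ((neg_le_abs _).trans (key n))⟩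

lemma forward (A : Set X) (hA : Bornology.IsBounded A)
    (hcomp : IsCompact (closure ((toWeakSpace ℝ X) '' A))) :
    ∀ x : ℕ → X, (∀ n, x n ∈ A) →
      ∃ x₀ : X, ∀ f : StrongDual ℝ X, f x₀ ≤ limsup (fun n => f (x n)) atTop := by
  intro x hx
  have hmem : ∀ n, toWeakSpace ℝ X (x n) ∈ closure ((toWeakSpace ℝ X) '' A) :=
    fun n => subset_closure ⟨x n, hx n, rfl⟩
  obtain ⟨p, hp, hcl⟩ := hcomp.exists_mapClusterPt (u := fun n => toWeakSpace ℝ X (x n))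
    (f := atTop) (le_principal_iff.mpr (mem_map.mpr (Eventually.of_forall hmem)))
  refine ⟨(toWeakSpace ℝ X).symm p, fun f => ?_⟩
  have hev : @Continuous (WeakSpace ℝ X) ℝ (instTopologicalSpaceWeakSpace ℝ X) _
      (fun q => f ((toWeakSpace ℝ X).symm q)) :=
    by exact WeakBilin.eval_continuous ((topDualPairing ℝ X).flip) f
  have hcl2 := hcl.tendsto_comp (hev.tendsto p)
  set c := f ((toWeakSpace ℝ X).symm p)
  have hb := bddf A hA x hx f
  refine le_of_forall_pos_le_add fun ε hε => ?_
  have hfreq : ∃ᶠ n in atTop, c - ε ≤ f (x n) := by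
    have := (mapClusterPt_iff_frequently.mp hcl2) (Metric.ball c ε) (Metric.ball_mem_nhds c hε)
    exact this.mono fun n hn => by
      have : |f (x n) - c| < ε := by simpa [Real.dist_eq, Function.comp] using hn
      linarith [abs_lt.mp this |>.1]
  have := le_limsup_of_frequently_le hfreq hb.1
  linarith

lemma norming_finset {E : Type*} [NormedAddCommGroup E] [NormedSpace ℝ E]
    (s : Finset (StrongDual ℝ E)) :
    ∃ G : Finset E, (∀ y ∈ G, ‖y‖ ≤ 1) ∧
      ∀ u ∈ Submodule.span ℝ (s : Set (StrongDual ℝ E)), ∃ y ∈ G, ‖u‖ ≤ 2 * |u y| := by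
  classical
  set V := Submodule.span ℝ (s : Set (StrongDual ℝ E))
  have : FiniteDimensional ℝ V := FiniteDimensional.span_finset ℝ s
  -- the unit sphere of V, viewed inside StrongDual ℝ E
  set SP : Set (StrongDual ℝ E) := ((↑) : V → StrongDual ℝ E) '' Metric.sphere 0 1
  have hSPcomp : IsCompact SP := (isCompact_sphere (0 : V) 1).image continuous_subtype_val
  have hSPnorm : ∀ v ∈ SP, ‖v‖ = 1 := by
    rintro v ⟨w, hw, rfl⟩
    simpa [V] using (mem_sphere_zero_iff_norm.mp hw)
  -- choice of an almost-norming vector for each unit vector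
  have hch : ∀ v : StrongDual ℝ E, ‖v‖ = 1 → ∃ y : E, ‖y‖ ≤ 1 ∧ (3/4 : ℝ) < |v y| := by
    intro v hv
    obtain ⟨y, hy1, hy2⟩ := v.exists_lt_apply_of_lt_opNorm (r := 3/4) (by rw [hv]; norm_num)
    exact ⟨y, hy1.le, by simpa using hy2⟩
  set ych : StrongDual ℝ E → E := fun v => if h : ‖v‖ = 1 then (hch v h).choose else 0
  have hych : ∀ v : StrongDual ℝ E, ‖v‖ = 1 → ‖ych v‖ ≤ 1 ∧ (3/4 : ℝ) < |v (ych v)| := by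
    intro v hv
    simp only [ych, dif_pos hv]
    exact (hch v hv).choose_spec
  -- finite subcover of the sphere by 1/4-balls
  have hcover : SP ⊆ ⋃ v ∈ SP, Metric.ball v (1/4) := fun v hv =>
    Set.mem_biUnion hv (Metric.mem_ball_self (by norm_num))
  obtain ⟨b, hbSP, hbfin, hbcov⟩ := hSPcomp.elim_finite_subcover_image
    (fun v _ => Metric.isOpen_ball) hcover
  refine ⟨insert 0 (hbfin.toFinset.image ych), ?_, ?_⟩
  · intro y hy
    simp only [Finset.mem_insert, Finset.mem_image, Set.Finite.mem_toFinset] at hy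
    rcases hy with rfl | ⟨v, hv, rfl⟩
    · simp
    · exact (hych v (hSPnorm v (hbSP hv))).1
  · intro u hu
    rcases eq_or_ne u 0 with rfl | hu0
    · exact ⟨0, by simp, by simp⟩
    · have hnu : (0:ℝ) < ‖u‖ := norm_pos_iff.mpr hu0
      set v : StrongDual ℝ E := ‖u‖⁻¹ • u with hv
      have hvSP : v ∈ SP := by
        refine ⟨⟨v, ?_⟩, ?_, rfl⟩
        · exact Submodule.smul_mem _ _ hu
        · simp only [Metric.mem_sphere]
          rw [show dist (⟨v, _⟩ : V) 0 = ‖(⟨v, _⟩ : V)‖ by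
            have := dist_zero_right (⟨v, Submodule.smul_mem _ _ hu⟩ : V); exact this]
          rw [show ‖(⟨v, _⟩ : V)‖ = ‖v‖ from rfl, hv, norm_smul]
          simp [abs_of_pos hnu, inv_mul_cancel₀ hnu.ne']
      obtain ⟨v₀, hv₀b, hvball⟩ := Set.mem_iUnion₂.mp (hbcov hvSP)
      have hv₀SP : ‖v₀‖ = 1 := hSPnorm v₀ (hbSP hv₀b)
      obtain ⟨hy1, hy2⟩ := hych v₀ hv₀SP
      set y := ych v₀
      refine ⟨y, by simp only [Finset.mem_insert, Finset.mem_image,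
        Set.Finite.mem_toFinset]; exact Or.inr ⟨v₀, hv₀b, rfl⟩, ?_⟩
      -- |v y| ≥ 3/4 - 1/4 = 1/2
      have hdist : ‖v - v₀‖ < 1/4 := by
        simpa [dist_eq_norm] using hvball
      have h1 : |(v - v₀) y| ≤ 1/4 := by
        calc |(v - v₀) y| ≤ ‖v - v₀‖ * ‖y‖ := (v - v₀).le_opNorm y
        _ ≤ (1/4) * 1 := mul_le_mul hdist.le hy1 (norm_nonneg _) (by norm_num)
        _ = 1/4 := by ring
      have h2 : (1/2 : ℝ) ≤ |v y| := by
        have h5 := abs_sub_abs_le_abs_sub (v₀ y) (v y)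
        have h3 : v₀ y - v y = (v - v₀) (-y) := by
          simp only [map_neg, ContinuousLinearMap.sub_apply]; ring
        have h6 : |(v - v₀) (-y)| ≤ 1/4 := by
          rw [map_neg, abs_neg]; exact h1
        rw [h3] at h5
        linarith
      have hvy : v y = ‖u‖⁻¹ * u y := by simp [hv]
      have : (1/2 : ℝ) ≤ ‖u‖⁻¹ * |u y| := by
        rw [← abs_of_pos (inv_pos.mpr hnu), ← abs_mul, ← hvy]; exact h2
      calc ‖u‖ = 2 * ((1/2) * ‖u‖) := by ring
      _ ≤ 2 * ((‖u‖⁻¹ * |u y|) * ‖u‖) := by nlinarith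
      _ = 2 * |u y| := by field_simp

lemma pick_exists (A : Set X) (z : WeakDual ℝ (StrongDual ℝ X))
    (hz : z ∈ @closure _ (instTopologicalSpaceWeakDual ℝ (StrongDual ℝ X)) ((fun a : X =>
      (inclusionInDoubleDual ℝ X a : WeakDual ℝ (StrongDual ℝ X))) '' A))
    (G : Finset (StrongDual ℝ X)) {ε : ℝ} (hε : 0 < ε) :
    ∃ a ∈ A, ∀ f ∈ G, |z f - f a| < ε := by
  classical
  set U : Set (WeakDual ℝ (StrongDual ℝ X)) :=
    ⋂ f ∈ G, {w : WeakDual ℝ (StrongDual ℝ X) | |w f - z f| < ε} with hU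
  have hUopen : IsOpen U := by
    refine isOpen_biInter_finset fun f _ => ?_
    have hc : Continuous fun w : WeakDual ℝ (StrongDual ℝ X) => w f := by
      exact WeakBilin.eval_continuous (topDualPairing ℝ (StrongDual ℝ X)) f
    have : {w : WeakDual ℝ (StrongDual ℝ X) | |w f - z f| < ε}
        = (fun w : WeakDual ℝ (StrongDual ℝ X) => w f) ⁻¹' Metric.ball (z f) ε := by
      ext w; simp [Metric.mem_ball, Real.dist_eq]
    rw [this]
    exact hc.isOpen_preimage _ Metric.isOpen_ball
  have hzU : z ∈ U := by
    simp only [hU, Set.mem_iInter, Set.mem_setOf_eq]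
    intro f _; simpa using hε
  obtain ⟨w, hwU, hwS⟩ := _root_.mem_closure_iff.mp hz U hUopen hzU
  obtain ⟨a, haA, rfl⟩ := hwS
  refine ⟨a, haA, fun f hf => ?_⟩
  have := Set.mem_iInter₂.mp hwU f hf
  simp only [Set.mem_setOf_eq] at this
  have h2 : (inclusionInDoubleDual ℝ X a : WeakDual ℝ (StrongDual ℝ X)) f = f a := rfl
  replace this : |f a - z f| < ε := this
  rw [abs_sub_comm]
  exact this

lemma backward_main (A : Set X) (hA : Bornology.IsBounded A)
    (hyp : ∀ x : ℕ → X, (∀ n, x n ∈ A) →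
      ∃ x₀ : X, ∀ f : StrongDual ℝ X, f x₀ ≤ limsup (fun n => f (x n)) atTop)
    (z : WeakDual ℝ (StrongDual ℝ X))
    (hz : z ∈ @closure _ (instTopologicalSpaceWeakDual ℝ (StrongDual ℝ X)) ((fun a : X =>
      (inclusionInDoubleDual ℝ X a : WeakDual ℝ (StrongDual ℝ X))) '' A)) :
    ∃ x₀ : X, (inclusionInDoubleDual ℝ X x₀ : WeakDual ℝ (StrongDual ℝ X)) = z := by
  classical
  haveI : ContinuousAdd (StrongDual ℝ (StrongDual ℝ X)) := by
    have := @IsTopologicalAddGroup.toContinuousAdd (StrongDual ℝ (StrongDual ℝ X)) ContinuousLinearMap.topologicalSpace ContinuousLinearMap.addCommGroup.toAddGroup inferInstance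
    exact this
  haveI : AddSubgroupClass (Submodule ℝ (StrongDual ℝ (StrongDual ℝ X))) (StrongDual ℝ (StrongDual ℝ X)) := by
    have := @Submodule.addSubgroupClass ℝ (StrongDual ℝ (StrongDual ℝ X)) _ ContinuousLinearMap.addCommGroup inferInstance
    exact this
  set Jb : X →L[ℝ] StrongDual ℝ (StrongDual ℝ X) := inclusionInDoubleDual ℝ X with hJb
  set z' : StrongDual ℝ (StrongDual ℝ X) := z with hz'
  -- choice functions
  have hpick : ∀ p : Finset (StrongDual ℝ X) × ℕ, ∃ a, a ∈ A ∧
      ∀ f ∈ p.1, |z' f - f a| < 1/(p.2+1) := by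
    intro p
    obtain ⟨a, h1, h2⟩ := pick_exists A z hz p.1
      (ε := 1/(p.2+1)) (by positivity)
    exact ⟨a, h1, h2⟩
  choose pk hpkA hpk using hpick
  choose ng hng1 hng2 using fun s : Finset (StrongDual ℝ (StrongDual ℝ X)) => norming_finset s
  -- the recursive construction
  set step : ℕ → (Finset (StrongDual ℝ X) × Finset (StrongDual ℝ (StrongDual ℝ X))) →
      (Finset (StrongDual ℝ X) × Finset (StrongDual ℝ (StrongDual ℝ X))) := fun n p =>
    (p.1 ∪ ng (insert (Jb (pk (p.1, n))) p.2), insert (Jb (pk (p.1, n))) p.2) with hstep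
  set st : ℕ → Finset (StrongDual ℝ X) × Finset (StrongDual ℝ (StrongDual ℝ X)) :=
    fun n => Nat.rec (ng {z'}, {z'}) step n with hst
  set xx : ℕ → X := fun n => pk ((st n).1, n) with hxxdef
  have hstsucc : ∀ n, st (n+1) =
      ((st n).1 ∪ ng (insert (Jb (xx n)) (st n).2), insert (Jb (xx n)) (st n).2) :=
    fun n => rfl
  have hxxA : ∀ n, xx n ∈ A := fun n => hpkA ((st n).1, n)
  have hxx : ∀ n, ∀ f ∈ (st n).1, |z' f - f (xx n)| < 1/(n+1) := fun n => hpk ((st n).1, n)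
  have hmono1 : ∀ m n, m ≤ n → (st m).1 ⊆ (st n).1 := by
    intro m n h
    induction n, h using Nat.le_induction with
    | base => exact fun _ h => h
    | succ n _ ih =>
      intro f hf
      rw [hstsucc n]
      exact Finset.mem_union_left _ (ih hf)
  have hmono2 : ∀ m n, m ≤ n → (st m).2 ⊆ (st n).2 := by
    intro m n h
    induction n, h using Nat.le_induction with
    | base => exact fun _ h => h
    | succ n _ ih =>
      intro f hf
      rw [hstsucc n]
      exact Finset.mem_insert_of_mem (ih hf)
  have hzmem : ∀ n, z' ∈ (st n).2 := fun n =>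
    hmono2 0 n (Nat.zero_le n) (Finset.mem_singleton_self z')
  have hJxxmem : ∀ n, Jb (xx n) ∈ (st (n+1)).2 := by
    intro n
    rw [hstsucc n]
    exact Finset.mem_insert_self _ _
  have hGnorm : ∀ n, ∀ u ∈ Submodule.span ℝ (((st n).2 : Finset _) : Set (StrongDual ℝ (StrongDual ℝ X))),
      ∃ f ∈ (st n).1, ‖u‖ ≤ 2 * |u f| := by
    intro n u hu
    cases n with
    | zero =>
      obtain ⟨f, hf, hf2⟩ := hng2 {z'} u hu
      exact ⟨f, hf, hf2⟩
    | succ n =>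
      obtain ⟨f, hf, hf2⟩ := hng2 (insert (Jb (xx n)) (st n).2) u (by
        rw [hstsucc n] at hu; exact hu)
      refine ⟨f, ?_, hf2⟩
      rw [hstsucc n]
      exact Finset.mem_union_right _ hf
  have hGle : ∀ n, ∀ f ∈ (st n).1, ‖f‖ ≤ 1 := by
    intro n
    induction n with
    | zero => exact hng1 {z'}
    | succ n ih =>
      intro f hf
      rw [hstsucc n] at hf
      rcases Finset.mem_union.mp hf with h | h
      · exact ih f h
      · exact hng1 _ f h
  -- convergence of f (xx n) to z' f for f in the countable family
  have htend : ∀ m, ∀ f ∈ (st m).1, Tendsto (fun n => f (xx n)) atTop (𝓝 (z' f)) := by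
    intro m f hf
    rw [Metric.tendsto_atTop]
    intro ε hε
    obtain ⟨N₀, hN₀⟩ := exists_nat_one_div_lt hε
    refine ⟨max m N₀, fun n hn => ?_⟩
    have h1 : |z' f - f (xx n)| < 1/(n+1) :=
      hxx n f (hmono1 m n (le_trans (le_max_left _ _) hn) hf)
    have h2 : (1:ℝ)/(n+1) ≤ 1/(N₀+1) := by
      apply one_div_le_one_div_of_le (by positivity)
      have : (N₀ : ℝ) ≤ n := Nat.cast_le.mpr (le_trans (le_max_right _ _) hn)
      linarith
    rw [Real.dist_eq, abs_sub_comm]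
    linarith
  -- apply the hypothesis
  obtain ⟨x₀, hx₀⟩ := hyp xx hxxA
  have heq : ∀ m, ∀ f ∈ (st m).1, f x₀ = z' f := by
    intro m f hf
    have h1 : limsup (fun n => f (xx n)) atTop = z' f := (htend m f hf).limsup_eq
    have h2 := hx₀ f
    rw [h1] at h2
    have h4 : Tendsto (fun n => (-f) (xx n)) atTop (𝓝 (-(z' f))) := by
      have := (htend m f hf).neg
      simpa using this
    have h5 : limsup (fun n => (-f) (xx n)) atTop = -(z' f) := h4.limsup_eq
    have h3 := hx₀ (-f)
    rw [h5] at h3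
    have h6 : (-f) x₀ = -(f x₀) := rfl
    rw [h6] at h3
    linarith
  -- x₀ lies in the closed convex hull of the sequence
  have hx₀C : x₀ ∈ closure (convexHull ℝ (Set.range xx)) := by
    by_contra h
    obtain ⟨f, u, hfu, hux⟩ := geometric_hahn_banach_closed_point
      ((convex_convexHull ℝ _).closure) isClosed_closure h
    have hcb : IsCoboundedUnder (· ≤ ·) atTop (fun n => f (xx n)) :=
      (bddf A hA xx hxxA f).2.isCoboundedUnder_le
    have hub : limsup (fun n => f (xx n)) atTop ≤ u := by
      apply limsup_le_of_le hcb
      exact Eventually.of_forall fun n => (hfu _ (subset_closure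
        (subset_convexHull ℝ _ (Set.mem_range_self n)))).le
    linarith [hx₀ f]
  -- the span M
  set M : Submodule ℝ (StrongDual ℝ (StrongDual ℝ X)) :=
    Submodule.span ℝ (insert z' (Set.range fun n => Jb (xx n))) with hM
  have hJx₀M : Jb x₀ ∈ closure (M : Set (StrongDual ℝ (StrongDual ℝ X))) := by
    have h1 : Jb x₀ ∈ closure (Jb '' (convexHull ℝ (Set.range xx))) :=
      image_closure_subset_closure_image Jb.continuous ⟨x₀, hx₀C, rfl⟩
    refine closure_mono ?_ h1
    have h2 : convexHull ℝ (Set.range xx) ⊆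
        (Submodule.span ℝ (Set.range xx) : Set X) :=
      convexHull_min Submodule.subset_span (Submodule.span ℝ (Set.range xx)).convex
    intro y hy
    obtain ⟨a, ha, rfl⟩ := hy
    have h3 : Jb a ∈ Submodule.map (Jb : X →ₗ[ℝ] StrongDual ℝ (StrongDual ℝ X))
        (Submodule.span ℝ (Set.range xx)) := ⟨a, h2 ha, rfl⟩
    rw [Submodule.map_span] at h3
    refine Submodule.span_mono ?_ h3
    rintro v ⟨a, ⟨n, rfl⟩, rfl⟩
    exact Set.mem_insert_of_mem _ ⟨n, rfl⟩
  set w : StrongDual ℝ (StrongDual ℝ X) := z' - Jb x₀ with hw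
  have hwM : w ∈ closure (M : Set (StrongDual ℝ (StrongDual ℝ X))) := by
    have h1 : z' ∈ M.topologicalClosure :=
      M.le_topologicalClosure (Submodule.subset_span (Set.mem_insert _ _))
    have h2 : Jb x₀ ∈ M.topologicalClosure := by
      rw [← SetLike.mem_coe, Submodule.topologicalClosure_coe]
      exact hJx₀M
    have h3 : w ∈ M.topologicalClosure := sub_mem h1 h2
    rw [← SetLike.mem_coe, Submodule.topologicalClosure_coe] at h3
    exact h3
  have hwf : ∀ m, ∀ f ∈ (st m).1, w f = 0 := by
    intro m f hf
    have h1 : Jb x₀ f = f x₀ := rfl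
    rw [hw, ContinuousLinearMap.sub_apply, h1, heq m f hf, sub_self]
  -- every element of M lies in some span of (st n).2
  have hMn : ∀ u ∈ M, ∃ n, u ∈ Submodule.span ℝ (((st n).2 : Finset _) : Set (StrongDual ℝ (StrongDual ℝ X))) := by
    intro u hu
    obtain ⟨t, hts, htu⟩ := Submodule.mem_span_finite_of_mem_span hu
    have key : ∀ t' : Finset (StrongDual ℝ (StrongDual ℝ X)), (∀ y ∈ t', ∃ n, y ∈ (st n).2) →
        ∃ n, (t' : Set (StrongDual ℝ (StrongDual ℝ X))) ⊆ ((st n).2 : Set _) := by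
      intro t'
      induction t' using Finset.induction with
      | empty => exact fun _ => ⟨0, by simp⟩
      | @insert a t'' ha ih =>
        intro hy
        obtain ⟨n₁, hn₁⟩ := hy _ (Finset.mem_insert_self _ _)
        obtain ⟨n₂, hn₂⟩ := ih (fun y hy' => hy y (Finset.mem_insert_of_mem hy'))
        refine ⟨max n₁ n₂, ?_⟩
        intro y hy'
        rcases Finset.mem_insert.mp hy' with rfl | h
        · exact hmono2 n₁ _ (le_max_left _ _) hn₁
        · exact hmono2 n₂ _ (le_max_right _ _) (hn₂ h)
    have hy : ∀ y ∈ t, ∃ n, y ∈ (st n).2 := by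
      intro y hyt
      rcases hts hyt with rfl | ⟨n, rfl⟩
      · exact ⟨0, hzmem 0⟩
      · exact ⟨n+1, hJxxmem n⟩
    obtain ⟨n, hn⟩ := key t hy
    exact ⟨n, Submodule.span_mono hn htu⟩
  -- conclude w = 0
  have hwsmall : ∀ ε : ℝ, 0 < ε → ‖w‖ ≤ 3 * ε := by
    intro ε hε
    obtain ⟨u, huM, hdu⟩ := (Metric.mem_closure_iff (α := StrongDual ℝ (StrongDual ℝ X)) |>.mp hwM) ε hε
    obtain ⟨n, hun⟩ := hMn u huM
    obtain ⟨f, hfG, hfu⟩ := hGnorm n u hun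
    have hf1 := hGle n f hfG
    have hwf0 := hwf n f hfG
    have h1 : |u f| ≤ ε := by
      calc |u f| = |(u - w) f| := by
            rw [ContinuousLinearMap.sub_apply, hwf0, sub_zero]
      _ ≤ ‖u - w‖ * ‖f‖ := by
            have := (u - w).le_opNorm f
            simpa using this
      _ ≤ ε * 1 := by
            apply mul_le_mul _ hf1 (norm_nonneg _) hε.le
            rw [← dist_eq_norm (E := StrongDual ℝ (StrongDual ℝ X)), dist_comm]
            exact hdu.le
      _ = ε := mul_one ε
    calc ‖w‖ ≤ ‖u‖ + ‖w - u‖ := norm_le_insert' w u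
    _ ≤ ε + 2 * |u f| := by
          have h2 : ‖w - u‖ ≤ ε := by rw [← dist_eq_norm (E := StrongDual ℝ (StrongDual ℝ X))]; exact hdu.le
          linarith
    _ ≤ ε + 2 * ε := by linarith
    _ = 3 * ε := by ring
  have hnw : ‖w‖ ≤ 0 := le_of_forall_pos_le_add fun ε hε => by
    have := hwsmall (ε/3) (by linarith); linarith
  have hw0 : w = 0 := by have := norm_le_zero_iff (E := StrongDual ℝ (StrongDual ℝ X)) |>.mp hnw; exact this
  refine ⟨x₀, ?_⟩
  have : Jb x₀ = z' := by
    have := sub_eq_zero (G := StrongDual ℝ (StrongDual ℝ X)) |>.mp hw0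
    exact this.symm
  exact this

theorem backward_final (A : Set X) (hA : Bornology.IsBounded A)
    (hyp : ∀ x : ℕ → X, (∀ n, x n ∈ A) →
      ∃ x₀ : X, ∀ f : StrongDual ℝ X, f x₀ ≤ limsup (fun n => f (x n)) atTop) :
    IsCompact (closure ((toWeakSpace ℝ X) '' A)) := by
  classical
  set S : Set (WeakDual ℝ (StrongDual ℝ X)) := (fun a : X =>
    (inclusionInDoubleDual ℝ X a : WeakDual ℝ (StrongDual ℝ X))) '' A with hS
  set T : Set (WeakDual ℝ (StrongDual ℝ X)) := @closure _ (instTopologicalSpaceWeakDual ℝ (StrongDual ℝ X)) S with hT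
  obtain ⟨r, hr⟩ := hA.subset_closedBall 0
  have hSb : S ⊆ WeakDual.toStrongDual ⁻¹' Metric.closedBall 0 r := by
    rintro w ⟨a, ha, rfl⟩
    have h1 : ‖inclusionInDoubleDual ℝ X a‖ = ‖a‖ :=
      (inclusionInDoubleDualLi ℝ (E := X)).norm_map a
    have h2 : ‖a‖ ≤ r := by
      have := hr ha
      simpa [Metric.mem_closedBall, dist_zero_right] using this
    have h3 : ‖inclusionInDoubleDual ℝ X a‖ ≤ r := h1 ▸ h2
    have h4 := mem_closedBall_zero_iff (E := StrongDual ℝ (StrongDual ℝ X)) |>.mpr h3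
    exact h4
  have hTclosed : @IsClosed _ (instTopologicalSpaceWeakDual ℝ (StrongDual ℝ X)) T := by
    rw [hT]
    exact isClosed_closure (X := WeakDual ℝ (StrongDual ℝ X)) (s := S)
  have hTsub : T ⊆ WeakDual.toStrongDual ⁻¹' Metric.closedBall 0 r := by
    rw [hT]
    exact closure_minimal (X := WeakDual ℝ (StrongDual ℝ X)) hSb
      (WeakDual.isClosed_closedBall (𝕜 := ℝ) (E := StrongDual ℝ X) 0 r)
  have hTcomp : @IsCompact _ (instTopologicalSpaceWeakDual ℝ (StrongDual ℝ X)) T :=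
    IsCompact.of_isClosed_subset (WeakDual.isCompact_closedBall (𝕜 := ℝ) (E := StrongDual ℝ X) 0 r) hTclosed hTsub
  have hTr : T ⊆ Set.range (psi (X := X)) := by
    intro w hw
    obtain ⟨x₀, h⟩ := backward_main A hA hyp w hw
    exact ⟨toWeakSpace ℝ X x₀, h⟩
  have hpre : IsCompact (psi ⁻¹' T) := psi_inducing.isCompact_preimage' hTcomp hTr
  have hsub : closure ((toWeakSpace ℝ X) '' A) ⊆ psi ⁻¹' T := by
    apply closure_minimal
    · rintro y ⟨a, ha, rfl⟩
      have : (fun a : X => (inclusionInDoubleDual ℝ X a : WeakDual ℝ (StrongDual ℝ X))) a ∈ S :=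
        ⟨a, ha, rfl⟩
      rw [hT]
      exact subset_closure (X := WeakDual ℝ (StrongDual ℝ X)) (s := S) this
    · exact hTclosed.preimage psi_inducing.continuous
  exact hpre.of_isClosed_subset isClosed_closure hsub

theorem wrc_iff_limsup (A : Set X) (hA : Bornology.IsBounded A) :
    IsCompact (closure ((toWeakSpace ℝ X) '' A)) ↔
      ∀ x : ℕ → X, (∀ n, x n ∈ A) →
        ∃ x₀ : X, ∀ f : StrongDual ℝ X, f x₀ ≤ limsup (fun n => f (x n)) atTop := by
  constructor
  · exact forward A hA
  · exact backward_final A hA
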